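/- Let f ∈ ℕ and write f = f₁f₂ with f₁ squarefree, f₂ squarefull and gcd(f₁,f₂) = 1. Then for any C ≥ 1 and ε > 0, Σ_{c ≤ C, c squarefull} c^{1/2} gcd(c,f) ≪_ε C f₂^{1/2} f^ε. -/

import Mathlib

open Finset
open scoped Classical

/-- `n` is squarefull if every prime dividing `n` divides it at least twice. -/
def Squarefull (n : ℕ) : Prop := ∀ p : ℕ, p.Prime → p ∣ n → p ^ 2 ∣ n

lemma aux_sum_le (M : ℕ) : ∑ t ∈ Icc 1 M, 1/((t:ℝ) * Real.sqrt t) ≤ 3 := by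
  have key : ∀ M : ℕ, 1 ≤ M → ∑ t ∈ Icc 1 M, 1/((t:ℝ) * Real.sqrt t) ≤ 3 - 2 / Real.sqrt M := by
    intro M hM
    induction M with
    | zero => omega
    | succ n ih =>
      rcases Nat.eq_or_lt_of_le hM with h1 | h1
      · simp [← h1]
        norm_num
      · have hn : 1 ≤ n := by omega
        have hih := ih hn
        rw [Finset.sum_Icc_succ_top (by omega)]
        set s0 := Real.sqrt n with hs0
        set s1 := Real.sqrt ((n:ℕ)+1 : ℕ) with hs1
        have hcast : (((n:ℕ)+1 : ℕ) : ℝ) = (n:ℝ)+1 := by push_cast; ring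
        have hs : s0 ≤ s1 := by
          apply Real.sqrt_le_sqrt; push_cast; linarith
        have hn0 : (0:ℝ) < s0 := Real.sqrt_pos.mpr (by positivity)
        have hn1 : (0:ℝ) < s1 := Real.sqrt_pos.mpr (by rw [hcast]; positivity)
        have hsq : s0 * s0 = (n:ℝ) := Real.mul_self_sqrt (by positivity)
        have hsq1 : s1 * s1 = ((n:ℝ)+1) := by
          rw [hs1, Real.mul_self_sqrt (by positivity), hcast]
        have key2 : 1/((((n:ℕ)+1:ℕ):ℝ) * s1) + 2 / s1 ≤ 2 / s0 := by
          rw [hcast]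
          have main : ((2:ℝ)*n+3) * s0 ≤ 2*((n:ℝ)+1) * s1 := by
            nlinarith [mul_pos hn0 hn1, sq_nonneg (s1 - s0), sq_nonneg ((n:ℝ)*(s1-s0)), mul_pos (mul_pos hn0 hn1) hn1, sq_nonneg (s1+s0)]
          rw [div_add_div _ _ (by positivity) (by positivity), div_le_div_iff₀ (by positivity) hn0]
          nlinarith [mul_pos hn0 hn1]
        push_cast at hih ⊢
        push_cast at key2
        linarith
  rcases Nat.eq_zero_or_pos M with h | h
  · simp [h]
  · have h1 : 0 < Real.sqrt M := Real.sqrt_pos.mpr (by positivity)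
    have h2 : 0 < 2 / Real.sqrt M := by positivity
    linarith [key M h]

lemma extract (c : ℕ) (hc : c ≠ 0) (hc1 : c ≠ 1) :
    ∃ p k m, p.Prime ∧ k = c.factorization p ∧ ¬ p ∣ m ∧ c = p ^ k * m ∧ m ≠ 0 ∧ m < c ∧ 1 ≤ k := by
  have hp : c.minFac.Prime := Nat.minFac_prime hc1
  have hm0 : ordCompl[c.minFac] c ≠ 0 := (Nat.ordCompl_pos _ hc).ne'
  have hk1 : 1 ≤ c.factorization c.minFac := by
    rw [← Nat.Prime.dvd_iff_one_le_factorization hp hc]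
    exact Nat.minFac_dvd c
  refine ⟨c.minFac, c.factorization c.minFac, ordCompl[c.minFac] c, hp, rfl,
    Nat.not_dvd_ordCompl hp hc, (Nat.ordProj_mul_ordCompl_eq_self c c.minFac).symm, hm0, ?_, hk1⟩
  have h2 : 2 ≤ c.minFac ^ c.factorization c.minFac := by
    calc 2 ≤ c.minFac := hp.two_le
    _ = c.minFac ^ 1 := (pow_one _).symm
    _ ≤ _ := Nat.pow_le_pow_right hp.pos hk1
  exact Nat.div_lt_self (Nat.pos_of_ne_zero hc) h2

lemma squarefull_decomp : ∀ c : ℕ, c ≠ 0 → Squarefull c →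
    ∃ a b : ℕ, a ≠ 0 ∧ b ≠ 0 ∧ Squarefree b ∧ c = a^2 * b^3 := by
  intro c
  induction c using Nat.strong_induction_on with
  | _ c ih =>
    intro hc h
    rcases eq_or_ne c 1 with rfl | hc1
    · exact ⟨1, 1, one_ne_zero, one_ne_zero, squarefree_one, rfl⟩
    obtain ⟨p, k, m, hp, hkdef, hpm, hcm, hm0, hmlt, hk1⟩ := extract c hc hc1
    -- m is squarefull
    have hmsf : Squarefull m := by
      intro q hq hqm
      have hqc : q ^ 2 ∣ c := h q hq (hqm.trans ⟨p^k, by rw [hcm]; ring⟩)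
      have hqp : q ≠ p := fun hqp => hpm (hqp ▸ hqm)
      have : Nat.Coprime (q^2) (p^k) :=
        Nat.Coprime.pow _ _ ((Nat.coprime_primes hq hp).mpr hqp)
      exact this.dvd_of_dvd_mul_left (hcm ▸ hqc)
    have hk2 : 2 ≤ k := by
      have hpc : p ∣ c := by rw [hcm]; exact Dvd.dvd.mul_right (dvd_pow_self p (by omega)) m
      have := h p hp hpc
      rw [hkdef]
      rwa [← Nat.Prime.pow_dvd_iff_le_factorization hp hc]
    obtain ⟨a, b, ha, hb, hbsf, hab⟩ := ih m hmlt hm0 hmsf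
    have hpb : ¬ p ∣ b := fun hdvd => hpm (hab ▸ hdvd.trans ⟨a^2*b^2, by ring⟩)
    rcases Nat.even_or_odd k with he | ho
    · obtain ⟨j, hj⟩ := he
      refine ⟨p^j * a, b, mul_ne_zero (pow_ne_zero _ hp.ne_zero) ha, hb, hbsf, ?_⟩
      rw [hcm, hab, hj]; ring
    · have h3 : 3 ≤ k := by rcases ho with ⟨j, hj⟩; omega
      obtain ⟨j, hj⟩ : ∃ j, k = 2*j + 3 := by
        rcases ho with ⟨i, hi⟩; exact ⟨i - 1, by omega⟩
      refine ⟨p^j * a, p * b, mul_ne_zero (pow_ne_zero _ hp.ne_zero) ha, mul_ne_zero hp.ne_zero hb, ?_, ?_⟩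
      · exact (Nat.squarefree_mul ((Nat.Prime.coprime_iff_not_dvd hp).mpr hpb)).mpr
          ⟨hp.squarefree, hbsf⟩
      · rw [hcm, hab, hj]; ring

lemma sf_decomp : ∀ e : ℕ, e ≠ 0 →
    ∃ e1 e2 : ℕ, e = e1 * e2 ∧ Squarefree e1 ∧ Squarefull e2 ∧ Nat.Coprime e1 e2 := by
  intro e
  induction e using Nat.strong_induction_on with
  | _ e ih =>
    intro he
    rcases eq_or_ne e 1 with rfl | he1
    · refine ⟨1, 1, rfl, squarefree_one, ?_, Nat.coprime_one_left 1⟩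
      intro p hp h
      exact absurd (Nat.eq_one_of_dvd_one h) hp.ne_one
    obtain ⟨p, k, m, hp, hkdef, hpm, hem, hm0, hmlt, hk1⟩ := extract e he he1
    obtain ⟨m1, m2, hm12, hm1sf, hm2sf, hmco⟩ := ih m hmlt hm0
    have hpm1 : ¬ p ∣ m1 := fun h => hpm (hm12 ▸ h.mul_right m2)
    have hpm2 : ¬ p ∣ m2 := fun h => hpm (hm12 ▸ h.mul_left m1)
    rcases eq_or_lt_of_le hk1 with hk | hk2
    · refine ⟨p * m1, m2, ?_, ?_, hm2sf, ?_⟩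
      · rw [hem, hm12, ← hk]; ring
      · exact (Nat.squarefree_mul ((Nat.Prime.coprime_iff_not_dvd hp).mpr hpm1)).mpr
          ⟨hp.squarefree, hm1sf⟩
      · exact Nat.Coprime.mul ((Nat.Prime.coprime_iff_not_dvd hp).mpr hpm2) hmco
    · refine ⟨m1, p^k * m2, ?_, hm1sf, ?_, ?_⟩
      · rw [hem, hm12]; ring
      · intro q hq hqd
        rcases (Nat.Prime.dvd_mul hq).mp hqd with hq1 | hq2
        · have hqp : q = p := (Nat.prime_dvd_prime_iff_eq hq hp).mp (hq.dvd_of_dvd_pow hq1)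
          subst hqp
          exact Dvd.dvd.mul_right (pow_dvd_pow q (by omega)) m2
        · exact (hm2sf q hq hq2).mul_left _
      · exact Nat.Coprime.mul_right (Nat.Coprime.pow_right _
          (Nat.coprime_comm.mp ((Nat.Prime.coprime_iff_not_dvd hp).mpr hpm1))) hmco

lemma exists_csqrt : ∀ E : ℕ, E ≠ 0 →
    ∃ r : ℕ, r ≠ 0 ∧ ∀ p : ℕ, r.factorization p = (E.factorization p + 1)/2 := by
  intro E
  induction E using Nat.strong_induction_on with
  | _ E ih =>
    intro hE
    rcases eq_or_ne E 1 with rfl | hE1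
    · exact ⟨1, one_ne_zero, fun p => by simp⟩
    obtain ⟨p, k, m, hp, hkdef, hpm, hEm, hm0, hmlt, hk1⟩ := extract E hE hE1
    obtain ⟨rm, hrm0, hrmf⟩ := ih m hmlt hm0
    refine ⟨p ^ ((k+1)/2) * rm, mul_ne_zero (pow_ne_zero _ hp.ne_zero) hrm0, fun q => ?_⟩
    have h1 : (p ^ ((k+1)/2) * rm).factorization q
        = (Finsupp.single p ((k+1)/2)) q + rm.factorization q := by
      rw [Nat.factorization_mul (pow_ne_zero _ hp.ne_zero) hrm0, hp.factorization_pow]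
      rfl
    have h2 : E.factorization q = (Finsupp.single p k) q + m.factorization q := by
      rw [hEm, Nat.factorization_mul (pow_ne_zero _ hp.ne_zero) hm0, hp.factorization_pow]
      rfl
    rw [h1, h2, hrmf q]
    rcases eq_or_ne p q with rfl | hpq
    · have : m.factorization p = 0 := Nat.factorization_eq_zero_of_not_dvd hpm
      rw [this, Finsupp.single_eq_same]
      omega
    · simp [Finsupp.single_eq_of_ne' hpq]

lemma csqrt_dvd {E r a : ℕ} (hE : E ≠ 0) (ha : a ≠ 0)
    (hrf : ∀ p : ℕ, r.factorization p = (E.factorization p + 1)/2) (hr : r ≠ 0)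
    (h : E ∣ a^2) : r ∣ a := by
  rw [← Nat.factorization_le_iff_dvd hr ha]
  rw [← Nat.factorization_le_iff_dvd hE (pow_ne_zero _ ha)] at h
  intro q
  have h2 := h q
  rw [Nat.factorization_pow] at h2
  simp only [Finsupp.smul_apply, smul_eq_mul] at h2
  rw [hrf q]
  omega

lemma key_dvd {e e1 e2 b E r : ℕ} (he : e = e1 * e2) (h1 : Squarefree e1)
    (h2 : Squarefull e2) (hco : Nat.Coprime e1 e2) (hb : Squarefree b) (hb0 : b ≠ 0) (he0 : e ≠ 0)
    (hE : E = e / Nat.gcd e (b^3)) (hr : r ≠ 0)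
    (hrf : ∀ p : ℕ, r.factorization p = (E.factorization p + 1)/2) :
    e * e1 ∣ r^2 * Nat.gcd b e ^ 3 := by
  have he10 : e1 ≠ 0 := fun h => he0 (by simp [he, h])
  have he20 : e2 ≠ 0 := fun h => he0 (by simp [he, h])
  have hg0 : Nat.gcd b e ≠ 0 := Nat.gcd_ne_zero_left hb0
  rw [← Nat.factorization_le_iff_dvd (mul_ne_zero he0 he10)
    (mul_ne_zero (pow_ne_zero _ hr) (pow_ne_zero _ hg0))]
  intro q
  rw [Nat.factorization_mul he0 he10, Nat.factorization_mul (pow_ne_zero _ hr) (pow_ne_zero _ hg0),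
    Nat.factorization_pow, Nat.factorization_pow]
  simp only [Finsupp.coe_add, Finsupp.smul_apply, Pi.add_apply, smul_eq_mul]
  -- gather per-prime facts
  have hve : e.factorization q = e1.factorization q + e2.factorization q := by
    rw [he, Nat.factorization_mul he10 he20]; rfl
  have hvb : b.factorization q ≤ 1 := hb.natFactorization_le_one q
  have hv1 : e1.factorization q ≤ 1 := h1.natFactorization_le_one q
  have hv2 : e2.factorization q = 0 ∨ 2 ≤ e2.factorization q := by
    by_cases hq : q.Prime
    · by_cases hd : q ∣ e2
      · right
        rw [← Nat.Prime.pow_dvd_iff_le_factorization hq he20]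
        exact h2 q hq hd
      · exact Or.inl (Nat.factorization_eq_zero_of_not_dvd hd)
    · exact Or.inl (Nat.factorization_eq_zero_of_not_prime _ hq)
  have hvco : e1.factorization q = 0 ∨ e2.factorization q = 0 := by
    by_cases hq : q.Prime
    · by_contra hcon
      push_neg at hcon
      have hd1 : q ∣ e1 := hq.dvd_iff_one_le_factorization he10 |>.mpr (by omega)
      have hd2 : q ∣ e2 := hq.dvd_iff_one_le_factorization he20 |>.mpr (by omega)
      have : q ∣ 1 := hco ▸ Nat.dvd_gcd hd1 hd2
      exact hq.ne_one (Nat.eq_one_of_dvd_one this)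
    · exact Or.inl (Nat.factorization_eq_zero_of_not_prime _ hq)
  have hvE : E.factorization q
      = e.factorization q - min (e.factorization q) (3 * b.factorization q) := by
    rw [hE, Nat.factorization_div (Nat.gcd_dvd_left e (b^3)),
      Nat.factorization_gcd he0 (pow_ne_zero _ hb0), Nat.factorization_pow]
    simp [Finsupp.inf_apply]
  have hvg : (Nat.gcd b e).factorization q
      = min (b.factorization q) (e.factorization q) := by
    rw [Nat.factorization_gcd hb0 he0]
    simp [Finsupp.inf_apply]
  rw [hvg, hrf q, hvE]
  omega

lemma sfull_part_dvd {f f1 f2 e e1 e2 : ℕ} (hf : f = f1 * f2) (hsf : Squarefree f1)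
    (hco : Nat.Coprime f1 f2) (hef : e ∣ f) (he : e = e1 * e2)
    (he2 : Squarefull e2) (hf0 : f ≠ 0) : e2 ∣ f2 := by
  have he0 : e ≠ 0 := fun h => hf0 (Nat.eq_zero_of_zero_dvd (h ▸ hef))
  have he20 : e2 ≠ 0 := fun h => he0 (by simp [he, h])
  have hf10 : f1 ≠ 0 := fun h => hf0 (by simp [hf, h])
  have hf20 : f2 ≠ 0 := fun h => hf0 (by simp [hf, h])
  rw [← Nat.factorization_le_iff_dvd he20 hf20]
  intro q
  have hd : e2.factorization q ≤ f.factorization q := by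
    have : e2 ∣ f := (he ▸ Dvd.intro_left e1 rfl).trans hef
    exact (Nat.factorization_le_iff_dvd he20 hf0).mpr this q
  have hvf : f.factorization q = f1.factorization q + f2.factorization q := by
    rw [hf, Nat.factorization_mul hf10 hf20]; rfl
  have hv1 : f1.factorization q ≤ 1 := hsf.natFactorization_le_one q
  have hv2 : e2.factorization q = 0 ∨ 2 ≤ e2.factorization q := by
    by_cases hq : q.Prime
    · by_cases hd2 : q ∣ e2
      · right
        rw [← Nat.Prime.pow_dvd_iff_le_factorization hq he20]
        exact he2 q hq hd2
      · exact Or.inl (Nat.factorization_eq_zero_of_not_dvd hd2)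
    · exact Or.inl (Nat.factorization_eq_zero_of_not_prime _ hq)
  have hvco : f1.factorization q = 0 ∨ f2.factorization q = 0 := by
    by_cases hq : q.Prime
    · by_contra hcon
      push_neg at hcon
      have hd1 : q ∣ f1 := hq.dvd_iff_one_le_factorization hf10 |>.mpr (by omega)
      have hd2 : q ∣ f2 := hq.dvd_iff_one_le_factorization hf20 |>.mpr (by omega)
      have : q ∣ 1 := hco ▸ Nat.dvd_gcd hd1 hd2
      exact hq.ne_one (Nat.eq_one_of_dvd_one this)
    · exact Or.inl (Nat.factorization_eq_zero_of_not_prime _ hq)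
  omega

lemma divisor_bound (δ : ℝ) (hδ : 0 < δ) : ∃ K : ℝ, 1 ≤ K ∧
    ∀ n : ℕ, n ≠ 0 → (n.divisors.card : ℝ) ≤ K * (n:ℝ) ^ δ := by
  set M : ℝ := max 1 (2/(δ * Real.log 2)) with hM
  have hM1 : 1 ≤ M := le_max_left _ _
  have hlog2 : 0 < Real.log 2 := Real.log_pos (by norm_num)
  set P0 : ℕ := ⌈(2:ℝ) ^ (1/δ)⌉₊ with hP0
  refine ⟨M ^ (P0 + 1), one_le_pow₀ hM1, ?_⟩
  intro n hn
  set v := n.factorization with hv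
  have hτ : (n.divisors.card : ℝ) = ∏ p ∈ n.primeFactors, ((v p : ℝ) + 1) := by
    rw [Nat.card_divisors hn]
    push_cast
    rfl
  have hnδ : (n:ℝ) ^ δ = ∏ p ∈ n.primeFactors, ((p:ℝ) ^ δ) ^ (v p) := by
    have h1 : (n:ℝ) = ∏ p ∈ n.primeFactors, (p:ℝ) ^ (v p) := by
      conv_lhs => rw [← Nat.factorization_prod_pow_eq_self hn]
      rw [Nat.prod_factorization_eq_prod_primeFactors]
      push_cast
      rfl
    rw [h1, ← Real.finset_prod_rpow _ _ (fun p _ => by positivity)]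
    apply Finset.prod_congr rfl
    intro p hp
    rw [← Real.rpow_natCast (p:ℝ) (v p), ← Real.rpow_mul (by positivity),
      mul_comm, Real.rpow_mul (by positivity), Real.rpow_natCast]
  have hmain : (n.divisors.card : ℝ)
      ≤ (∏ p ∈ n.primeFactors, (if (p:ℝ)^δ < 2 then M else 1)) * (n:ℝ) ^ δ := by
    rw [hτ, hnδ, ← Finset.prod_mul_distrib]
    apply Finset.prod_le_prod (fun p _ => by positivity)
    intro p hp
    have hpp : p.Prime := Nat.prime_of_mem_primeFactors hp
    have hp2 : (2:ℝ) ≤ (p:ℝ) := by exact_mod_cast hpp.two_le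
    by_cases hcase : (p:ℝ)^δ < 2
    · simp only [hcase, if_true]
      set y : ℝ := Real.exp (Real.log 2 * δ) with hy
      have h2δ : y ≤ (p:ℝ)^δ := by
        rw [hy, ← Real.rpow_def_of_pos (by norm_num : (0:ℝ) < 2)]
        exact Real.rpow_le_rpow (by norm_num) hp2 hδ.le
      have hyv : y ^ (v p) ≤ ((p:ℝ)^δ) ^ (v p) :=
        pow_le_pow_left₀ (Real.exp_nonneg _) h2δ _
      have hbern : 1 + (v p : ℝ) * (y - 1) ≤ y ^ (v p) := by
        have := one_add_mul_le_pow (a := y - 1) (by nlinarith [Real.exp_nonneg (Real.log 2 * δ)]) (v p)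
        simpa using this
      have hy1 : δ * Real.log 2 + 1 ≤ y := by
        rw [hy, mul_comm (Real.log 2) δ]
        exact Real.add_one_le_exp _
      have hM2 : 2 ≤ M * (δ * Real.log 2) := by
        have : 2/(δ * Real.log 2) ≤ M := le_max_right _ _
        rw [div_le_iff₀ (by positivity)] at this
        linarith
      rcases Nat.eq_zero_or_pos (v p) with h0 | h0
      · simp [h0]; linarith
      · have hv1 : (1:ℝ) ≤ (v p : ℝ) := by exact_mod_cast h0
        have hM0 : (0:ℝ) ≤ M := by linarith
        have hyd : δ * Real.log 2 ≤ y - 1 := by linarith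
        have e1 : M * (δ * Real.log 2) * (v p : ℝ) ≤ M * (y - 1) * (v p : ℝ) :=
          mul_le_mul_of_nonneg_right (mul_le_mul_of_nonneg_left hyd hM0) (by positivity)
        have e2 : 2 * (v p : ℝ) ≤ M * (δ * Real.log 2) * (v p : ℝ) :=
          mul_le_mul_of_nonneg_right hM2 (by positivity)
        have c1 : M * (1 + (v p : ℝ) * (y - 1)) ≤ M * (y ^ (v p)) :=
          mul_le_mul_of_nonneg_left hbern hM0
        have c2 : M * (y ^ (v p)) ≤ M * (((p:ℝ)^δ) ^ (v p)) :=
          mul_le_mul_of_nonneg_left hyv hM0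
        nlinarith [e1, e2, c1, c2, hM1, hv1]
    · simp only [hcase, if_false, one_mul]
      push_neg at hcase
      calc ((v p : ℝ) + 1) ≤ 2 ^ (v p) := by
            exact_mod_cast Nat.lt_two_pow_self (n := v p)
        _ ≤ ((p:ℝ)^δ) ^ (v p) := pow_le_pow_left₀ (by norm_num) hcase _
  have hw : (∏ p ∈ n.primeFactors, (if (p:ℝ)^δ < 2 then M else 1)) ≤ M ^ (P0 + 1) := by
    rw [← Finset.prod_filter]
    rw [Finset.prod_const]
    have hsub : n.primeFactors.filter (fun p : ℕ => (p:ℝ)^δ < 2) ⊆ Finset.range (P0 + 1) := by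
      intro p hp
      rw [Finset.mem_filter] at hp
      rw [Finset.mem_range]
      by_contra hcon
      push_neg at hcon
      have hple : (2:ℝ) ^ (1/δ) ≤ (p:ℝ) := by
        calc (2:ℝ) ^ (1/δ) ≤ (P0 : ℝ) := Nat.le_ceil _
          _ ≤ (p:ℝ) := by exact_mod_cast by omega
      have : ((2:ℝ) ^ (1/δ)) ^ δ ≤ (p:ℝ) ^ δ :=
        Real.rpow_le_rpow (by positivity) hple hδ.le
      rw [← Real.rpow_mul (by norm_num), one_div, inv_mul_cancel₀ hδ.ne', Real.rpow_one] at this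
      linarith [hp.2]
    calc M ^ (n.primeFactors.filter (fun p : ℕ => (p:ℝ)^δ < 2)).card
        ≤ M ^ (Finset.range (P0+1)).card := by
          apply pow_le_pow_right₀ hM1
          exact Finset.card_le_card hsub
      _ = M ^ (P0 + 1) := by rw [Finset.card_range]
  calc (n.divisors.card : ℝ) ≤ _ := hmain
    _ ≤ M ^ (P0 + 1) * (n:ℝ) ^ δ := by
        apply mul_le_mul_of_nonneg_right hw (by positivity)

noncomputable def dP (c : ℕ) : ℕ × ℕ :=
  if h : c ≠ 0 ∧ Squarefull c then
    (Classical.choose (squarefull_decomp c h.1 h.2),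
     Classical.choose (Classical.choose_spec (squarefull_decomp c h.1 h.2)))
  else (1, 1)

lemma dP_spec {c : ℕ} (hc : c ≠ 0) (h : Squarefull c) :
    (dP c).1 ≠ 0 ∧ (dP c).2 ≠ 0 ∧ Squarefree (dP c).2 ∧ c = (dP c).1^2 * (dP c).2^3 := by
  rw [dP, dif_pos ⟨hc, h⟩]
  exact Classical.choose_spec (Classical.choose_spec (squarefull_decomp c hc h))

lemma key_T_bound (N e e1 e2 : ℕ) (he0 : e ≠ 0) (hdec : e = e1 * e2)
    (h1 : Squarefree e1) (h2 : Squarefull e2) (hco : Nat.Coprime e1 e2) :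
    (e1:ℝ) * Real.sqrt e2 *
      ∑ c ∈ (Icc 1 N).filter (fun c => Squarefull c ∧ e ∣ c), Real.sqrt c
    ≤ 3 * (e.divisors.card : ℝ) * N := by
  set A' : Finset ℕ := (Icc 1 N).filter (fun c => Squarefull c ∧ e ∣ c) with hA'
  have he10 : e1 ≠ 0 := fun h => he0 (by simp [hdec, h])
  have he20 : e2 ≠ 0 := fun h => he0 (by simp [hdec, h])
  have hspec : ∀ c ∈ A', (dP c).1 ≠ 0 ∧ (dP c).2 ≠ 0 ∧ Squarefree (dP c).2 ∧
      c = (dP c).1^2 * (dP c).2^3 := by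
    intro c hc
    rw [hA', Finset.mem_filter, Finset.mem_Icc] at hc
    exact dP_spec (by omega) hc.2.1
  -- step 1 : T ≤ sum over pairs
  set Pset : Finset (ℕ × ℕ) := ((Icc 1 N) ×ˢ (Icc 1 N)).filter
      (fun q => q.1^2*q.2^3 ≤ N ∧ Squarefree q.2 ∧ e ∣ q.1^2*q.2^3) with hPset
  have step1 : ∑ c ∈ A', Real.sqrt c ≤
      ∑ q ∈ Pset, Real.sqrt (q.1^2*q.2^3) := by
    have hinj : Set.InjOn dP A' := by
      intro c hc c' hc' h
      have s1 := (hspec c hc).2.2.2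
      have s2 := (hspec c' hc').2.2.2
      rw [s1, s2, h]
    calc ∑ c ∈ A', Real.sqrt c = ∑ c ∈ A', Real.sqrt ((dP c).1^2*(dP c).2^3) := by
          apply Finset.sum_congr rfl
          intro c hc
          conv_lhs => rw [(hspec c hc).2.2.2]
          push_cast
          ring_nf
      _ = ∑ q ∈ A'.image dP, Real.sqrt (q.1^2*q.2^3) := by
          rw [Finset.sum_image (fun x hx y hy h => hinj hx hy h)]
      _ ≤ ∑ q ∈ Pset, Real.sqrt (q.1^2*q.2^3) := by
          apply Finset.sum_le_sum_of_subset_of_nonneg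
          · intro q hq
            rw [Finset.mem_image] at hq
            obtain ⟨c, hc, rfl⟩ := hq
            obtain ⟨ha0, hb0, hbsf, hab⟩ := hspec c hc
            rw [hA', Finset.mem_filter, Finset.mem_Icc] at hc
            obtain ⟨⟨hc1, hcN⟩, hcsf, hec⟩ := hc
            rw [hPset, Finset.mem_filter, Finset.mem_product, Finset.mem_Icc, Finset.mem_Icc]
            have hb1 : 1 ≤ (dP c).2 := Nat.one_le_iff_ne_zero.mpr hb0
            have ha1 : 1 ≤ (dP c).1 := Nat.one_le_iff_ne_zero.mpr ha0
            refine ⟨⟨⟨ha1, ?_⟩, ⟨hb1, ?_⟩⟩, hab ▸ hcN, hbsf, hab ▸ hec⟩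
            · calc (dP c).1 ≤ (dP c).1^2 := Nat.le_self_pow two_ne_zero _
                _ ≤ (dP c).1^2 * (dP c).2^3 := Nat.le_mul_of_pos_right _ (by positivity)
                _ ≤ N := hab ▸ hcN
            · calc (dP c).2 ≤ (dP c).2^3 := Nat.le_self_pow three_ne_zero _
                _ ≤ (dP c).1^2 * (dP c).2^3 := Nat.le_mul_of_pos_left _ (by positivity)
                _ ≤ N := hab ▸ hcN
          · intro q _ _
            positivity
  -- step 2 : pairs sum as iterated sum
  have step2 : ∑ q ∈ Pset, Real.sqrt (q.1^2*q.2^3)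
      = ∑ b ∈ Icc 1 N, ∑ a ∈ Icc 1 N,
          if a^2*b^3 ≤ N ∧ Squarefree b ∧ e ∣ a^2*b^3 then Real.sqrt (a^2*b^3) else 0 := by
    rw [hPset, Finset.sum_filter, Finset.sum_product_right]
  -- step 3 : per-b bound
  have step3 : ∀ b ∈ Icc 1 N,
      (e1:ℝ) * Real.sqrt e2 * (∑ a ∈ Icc 1 N,
        if a^2*b^3 ≤ N ∧ Squarefree b ∧ e ∣ a^2*b^3 then Real.sqrt (a^2*b^3) else 0)
      ≤ (N:ℝ) * (Real.sqrt ((Nat.gcd b e)^3) / Real.sqrt (b^3)) := by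
    intro b hb
    rw [Finset.mem_Icc] at hb
    have hb0 : b ≠ 0 := by omega
    by_cases hbsf : Squarefree b
    case neg =>
      have : ∀ a ∈ Icc 1 N, (if a^2*b^3 ≤ N ∧ Squarefree b ∧ e ∣ a^2*b^3
          then Real.sqrt (a^2*b^3) else 0) = 0 := by
        intro a _
        rw [if_neg (fun h => hbsf h.2.1)]
      rw [Finset.sum_congr rfl this, Finset.sum_const, smul_zero, mul_zero]
      positivity
    case pos =>
    -- set up E and r
    set g0 : ℕ := Nat.gcd e (b^3) with hg0
    have hg00 : g0 ≠ 0 := Nat.gcd_ne_zero_left he0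
    set E : ℕ := e / g0 with hE
    have hgd : g0 ∣ e := Nat.gcd_dvd_left _ _
    have hE0 : E ≠ 0 := by
      rw [hE]
      exact (Nat.div_pos (Nat.le_of_dvd (Nat.pos_of_ne_zero he0) hgd)
        (Nat.pos_of_ne_zero hg00)).ne'
    obtain ⟨r, hr0, hrf⟩ := exists_csqrt E hE0
    set K : ℕ := Nat.sqrt (N / (r^2*b^3)) with hK
    -- every admissible a is a multiple of r
    have hmult : ∀ a : ℕ, a ≠ 0 → e ∣ a^2*b^3 → r ∣ a := by
      intro a ha0 hdvd
      have hEa : E ∣ a^2 := by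
        have hcop : Nat.Coprime (e / g0) (b^3 / g0) := Nat.coprime_div_gcd_div_gcd
          (Nat.pos_of_ne_zero hg00)
        have hdvd2 : e / g0 ∣ a^2 * (b^3 / g0) := by
          obtain ⟨w, hw⟩ := hdvd
          refine ⟨w, ?_⟩
          have hgb : g0 ∣ b^3 := Nat.gcd_dvd_right _ _
          obtain ⟨b', hb'⟩ := hgb
          obtain ⟨e', he'⟩ := hgd
          rw [he', hb']
          rw [Nat.mul_div_cancel_left _ (Nat.pos_of_ne_zero hg00),
            Nat.mul_div_cancel_left _ (Nat.pos_of_ne_zero hg00)]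
          have h' : g0 * (a^2*b') = g0 * (e'*w) := by
            calc g0 * (a^2*b') = a^2*(g0*b') := by ring
              _ = a^2*b^3 := by rw [hb']
              _ = e*w := hw
              _ = g0*(e'*w) := by rw [he']; ring
          exact Nat.eq_of_mul_eq_mul_left (Nat.pos_of_ne_zero hg00) h'
        exact (Nat.Coprime.dvd_of_dvd_mul_right hcop hdvd2)
      exact csqrt_dvd hE0 ha0 hrf hr0 hEa
    -- bound the inner sum
    have inner_bound : (∑ a ∈ Icc 1 N,
        if a^2*b^3 ≤ N ∧ Squarefree b ∧ e ∣ a^2*b^3 then Real.sqrt (a^2*b^3) else 0)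
        ≤ Real.sqrt (b^3) * r * (K*K) := by
      have hsub : (Icc 1 N).filter (fun a => a^2*b^3 ≤ N ∧ Squarefree b ∧ e ∣ a^2*b^3)
          ⊆ (Icc 1 K).image (fun j => r * j) := by
        intro a ha
        rw [Finset.mem_filter, Finset.mem_Icc] at ha
        obtain ⟨⟨ha1, haN⟩, hab, _, hdvd⟩ := ha
        have hra := hmult a (by omega) hdvd
        obtain ⟨j, rfl⟩ := hra
        have hj0 : j ≠ 0 := by rintro rfl; omega
        rw [Finset.mem_image]
        refine ⟨j, ?_, rfl⟩
        rw [Finset.mem_Icc]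
        refine ⟨by omega, ?_⟩
        rw [hK, Nat.le_sqrt]
        rw [Nat.le_div_iff_mul_le (by positivity)]
        calc j * j * (r^2*b^3) = (r*j)^2*b^3 := by ring
          _ ≤ N := hab
      calc (∑ a ∈ Icc 1 N,
            if a^2*b^3 ≤ N ∧ Squarefree b ∧ e ∣ a^2*b^3 then Real.sqrt (a^2*b^3) else 0)
          = ∑ a ∈ (Icc 1 N).filter (fun a => a^2*b^3 ≤ N ∧ Squarefree b ∧ e ∣ a^2*b^3),
              Real.sqrt (a^2*b^3) := (Finset.sum_filter _ _).symm
        _ ≤ ∑ a ∈ (Icc 1 K).image (fun j => r * j), Real.sqrt (a^2*b^3) := by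
            apply Finset.sum_le_sum_of_subset_of_nonneg hsub
            intro a _ _; positivity
        _ = ∑ j ∈ Icc 1 K, Real.sqrt ((r*j)^2*b^3) := by
            rw [Finset.sum_image (fun x _ y _ h =>
              Nat.eq_of_mul_eq_mul_left (Nat.pos_of_ne_zero hr0) h)]
            apply Finset.sum_congr rfl
            intro j _
            push_cast
            ring_nf
        _ = ∑ j ∈ Icc 1 K, ((r:ℝ)*j) * Real.sqrt (b^3) := by
            apply Finset.sum_congr rfl
            intro j _
            push_cast
            rw [Real.sqrt_mul (by positivity), Real.sqrt_sq (by positivity)]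
        _ = Real.sqrt (b^3) * r * ∑ j ∈ Icc 1 K, (j:ℝ) := by
            rw [← Finset.sum_mul, ← Finset.mul_sum]
            ring
        _ ≤ Real.sqrt (b^3) * r * (K*K) := by
            apply mul_le_mul_of_nonneg_left _ (by positivity)
            calc ∑ j ∈ Icc 1 K, (j:ℝ) ≤ ∑ j ∈ Icc 1 K, (K:ℝ) := by
                  apply Finset.sum_le_sum
                  intro j hj
                  rw [Finset.mem_Icc] at hj
                  exact_mod_cast hj.2
              _ ≤ (K:ℝ)*K := by
                  rw [Finset.sum_const, Nat.card_Icc]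
                  simp
    -- key divisibility
    have hkd : e * e1 ∣ r^2 * Nat.gcd b e ^ 3 :=
      key_dvd hdec h1 h2 hco hbsf hb0 he0 hE hr0 hrf
    have hkd_real : (e1:ℝ) * Real.sqrt e2 ≤ (r:ℝ) * Real.sqrt ((Nat.gcd b e)^3) := by
      have h1' : (e1:ℝ) * Real.sqrt e2 = Real.sqrt (e * e1) := by
        rw [hdec]
        push_cast
        rw [show (e1:ℝ) * e2 * e1 = (e1:ℝ)^2 * e2 by ring, Real.sqrt_mul (by positivity),
          Real.sqrt_sq (by positivity)]
      have h2' : (r:ℝ) * Real.sqrt ((Nat.gcd b e)^3) = Real.sqrt (r^2 * Nat.gcd b e ^3) := by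
        push_cast
        rw [Real.sqrt_mul (by positivity), Real.sqrt_sq (by positivity)]
      rw [h1', h2']
      apply Real.sqrt_le_sqrt
      have hpos : 0 < r^2 * Nat.gcd b e ^ 3 :=
        Nat.pos_of_ne_zero (mul_ne_zero (pow_ne_zero _ hr0)
          (pow_ne_zero _ (Nat.gcd_ne_zero_left hb0)))
      have := Nat.le_of_dvd hpos hkd
      exact_mod_cast this
    -- K² bound
    have hK2 : (K:ℝ) * K ≤ (N:ℝ) / ((r:ℝ)^2 * (b:ℝ)^3) := by
      calc ((K:ℝ) * K) ≤ ((N / (r^2*b^3) : ℕ) : ℝ) := by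
            exact_mod_cast Nat.sqrt_le (N / (r^2*b^3))
        _ ≤ (N:ℝ) / ((r:ℝ)^2 * (b:ℝ)^3) := by
            have := Nat.cast_div_le (m := N) (n := r^2*b^3) (α := ℝ)
            push_cast at this ⊢
            exact this
    -- combine
    have hsb3 : Real.sqrt ((b:ℝ)^3) * Real.sqrt ((b:ℝ)^3) = (b:ℝ)^3 :=
      Real.mul_self_sqrt (by positivity)
    have hb3pos : (0:ℝ) < (b:ℝ)^3 := by
      have : (0:ℝ) < (b:ℝ) := by exact_mod_cast Nat.pos_of_ne_zero hb0
      positivity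
    have hrpos : (0:ℝ) < (r:ℝ) := by exact_mod_cast Nat.pos_of_ne_zero hr0
    calc (e1:ℝ) * Real.sqrt e2 * (∑ a ∈ Icc 1 N,
          if a^2*b^3 ≤ N ∧ Squarefree b ∧ e ∣ a^2*b^3 then Real.sqrt (a^2*b^3) else 0)
        ≤ ((r:ℝ) * Real.sqrt ((Nat.gcd b e)^3)) * (Real.sqrt (b^3) * r * (K*K)) := by
          apply mul_le_mul hkd_real inner_bound
          · apply Finset.sum_nonneg; intro a _; positivity
          · positivity
      _ ≤ ((r:ℝ) * Real.sqrt ((Nat.gcd b e)^3)) * (Real.sqrt (b^3) * r * ((N:ℝ) / ((r:ℝ)^2 * (b:ℝ)^3))) := by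
          apply mul_le_mul_of_nonneg_left _ (by positivity)
          apply mul_le_mul_of_nonneg_left hK2 (by positivity)
      _ = (N:ℝ) * (Real.sqrt ((Nat.gcd b e)^3) / Real.sqrt (b^3)) := by
          have hbR : (0:ℝ) < (b:ℝ) := by exact_mod_cast Nat.pos_of_ne_zero hb0
          push_cast
          have hsb3' : Real.sqrt ((b:ℝ)^3) * Real.sqrt ((b:ℝ)^3) = (b:ℝ)^3 :=
            Real.mul_self_sqrt (by positivity)
          have hs3 : Real.sqrt ((b:ℝ)^3) ≠ 0 := by
            intro h
            rw [h] at hsb3'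
            nlinarith [pow_pos hbR 3]
          have hrne : (r:ℝ) ≠ 0 := ne_of_gt hrpos
          have hb3ne : ((b:ℝ))^3 ≠ 0 := by positivity
          field_simp
          linear_combination (N:ℝ) * hsb3'
    -- end of step3
  -- step 4 : sum over b of the gcd weights
  have step4 : ∑ b ∈ Icc 1 N, Real.sqrt ((Nat.gcd b e)^3) / Real.sqrt (b^3)
      ≤ 3 * (e.divisors.card : ℝ) := by
    set m2 : ℕ → ℕ × ℕ := fun b => (Nat.gcd b e, b / Nat.gcd b e) with hm2
    have hrec : ∀ b ∈ Icc 1 N, Nat.gcd b e * (b / Nat.gcd b e) = b := by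
      intro b hb
      exact Nat.mul_div_cancel' (Nat.gcd_dvd_left b e)
    have hinj2 : Set.InjOn m2 (Icc 1 N) := by
      intro b hb b' hb' h
      have h1 : (m2 b).1 * (m2 b).2 = b := hrec b (by simpa using hb)
      have h2 : (m2 b').1 * (m2 b').2 = b' := hrec b' (by simpa using hb')
      rw [← h1, ← h2, h]
    have hterm : ∀ b ∈ Icc 1 N, Real.sqrt ((Nat.gcd b e)^3) / Real.sqrt (b^3)
        = 1 / (((b / Nat.gcd b e : ℕ):ℝ) * Real.sqrt ((b / Nat.gcd b e : ℕ):ℝ)) := by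
      intro b hb
      rw [Finset.mem_Icc] at hb
      have hb0 : b ≠ 0 := by omega
      set g : ℕ := Nat.gcd b e with hg
      set t : ℕ := b / g with ht
      have hgb : g ∣ b := Nat.gcd_dvd_left b e
      have hg0 : g ≠ 0 := Nat.gcd_ne_zero_left hb0
      have ht0 : t ≠ 0 := by
        rw [ht]
        exact (Nat.div_pos (Nat.le_of_dvd (Nat.pos_of_ne_zero hb0) hgb)
          (Nat.pos_of_ne_zero hg0)).ne'
      have hbt : b = g * t := by rw [ht, Nat.mul_div_cancel' hgb]
      have hgR : (0:ℝ) < (g:ℝ) := by exact_mod_cast Nat.pos_of_ne_zero hg0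
      have htR : (0:ℝ) < (t:ℝ) := by exact_mod_cast Nat.pos_of_ne_zero ht0
      rw [hbt]
      push_cast
      rw [mul_pow, Real.sqrt_mul (by positivity)]
      have h1 : Real.sqrt ((t:ℝ)^3) = (t:ℝ) * Real.sqrt t := by
        rw [show ((t:ℝ))^3 = ((t:ℝ))^2 * t by ring, Real.sqrt_mul (by positivity),
          Real.sqrt_sq (by positivity)]
      have hsg : (0:ℝ) < Real.sqrt ((g:ℝ)^3) := Real.sqrt_pos.mpr (by positivity)
      rw [h1]
      rw [div_eq_div_iff (by positivity) (by positivity)]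
      ring
    calc ∑ b ∈ Icc 1 N, Real.sqrt ((Nat.gcd b e)^3) / Real.sqrt (b^3)
        = ∑ b ∈ Icc 1 N, (1 / (((m2 b).2:ℝ) * Real.sqrt ((m2 b).2))) := by
          apply Finset.sum_congr rfl
          intro b hb
          exact hterm b hb
      _ = ∑ q ∈ (Icc 1 N).image m2, (1 / ((q.2:ℝ) * Real.sqrt q.2)) := by
          rw [Finset.sum_image (fun x hx y hy h => hinj2 hx hy h)]
      _ ≤ ∑ q ∈ e.divisors ×ˢ Icc 1 N, (1 / ((q.2:ℝ) * Real.sqrt q.2)) := by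
          apply Finset.sum_le_sum_of_subset_of_nonneg
          · intro q hq
            rw [Finset.mem_image] at hq
            obtain ⟨b, hb, rfl⟩ := hq
            rw [Finset.mem_Icc] at hb
            have hb0 : b ≠ 0 := by omega
            rw [Finset.mem_product, Nat.mem_divisors, Finset.mem_Icc]
            refine ⟨⟨Nat.gcd_dvd_right b e, he0⟩, ?_, ?_⟩
            · have hgb : Nat.gcd b e ∣ b := Nat.gcd_dvd_left b e
              have hgle : Nat.gcd b e ≤ b := Nat.le_of_dvd (Nat.pos_of_ne_zero hb0) hgb
              exact Nat.div_pos hgle (Nat.pos_of_ne_zero (Nat.gcd_ne_zero_left hb0))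
            · calc b / Nat.gcd b e ≤ b := Nat.div_le_self _ _
                _ ≤ N := hb.2
          · intro q _ _
            positivity
      _ = ∑ u ∈ e.divisors, ∑ t ∈ Icc 1 N, (1 / ((t:ℝ) * Real.sqrt t)) := by
          rw [Finset.sum_product]
      _ ≤ ∑ u ∈ e.divisors, (3:ℝ) := by
          apply Finset.sum_le_sum
          intro u _
          exact aux_sum_le N
      _ = 3 * (e.divisors.card : ℝ) := by
          rw [Finset.sum_const]
          push_cast
          ring
  -- combine all steps
  have hnn : (0:ℝ) ≤ (e1:ℝ) * Real.sqrt e2 := by positivity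
  calc (e1:ℝ) * Real.sqrt e2 * ∑ c ∈ A', Real.sqrt c
      ≤ (e1:ℝ) * Real.sqrt e2 * ∑ b ∈ Icc 1 N, ∑ a ∈ Icc 1 N,
          (if a^2*b^3 ≤ N ∧ Squarefree b ∧ e ∣ a^2*b^3 then Real.sqrt (a^2*b^3) else 0) := by
        apply mul_le_mul_of_nonneg_left _ hnn
        rw [← step2]
        exact step1
    _ = ∑ b ∈ Icc 1 N, (e1:ℝ) * Real.sqrt e2 * ∑ a ∈ Icc 1 N,
          (if a^2*b^3 ≤ N ∧ Squarefree b ∧ e ∣ a^2*b^3 then Real.sqrt (a^2*b^3) else 0) := by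
        rw [Finset.mul_sum]
    _ ≤ ∑ b ∈ Icc 1 N, (N:ℝ) * (Real.sqrt ((Nat.gcd b e)^3) / Real.sqrt (b^3)) :=
        Finset.sum_le_sum step3
    _ = (N:ℝ) * ∑ b ∈ Icc 1 N, Real.sqrt ((Nat.gcd b e)^3) / Real.sqrt (b^3) := by
        rw [Finset.mul_sum]
    _ ≤ (N:ℝ) * (3 * (e.divisors.card : ℝ)) := by
        apply mul_le_mul_of_nonneg_left step4 (by positivity)
    _ = 3 * (e.divisors.card : ℝ) * N := by ring

/-- with `f = f₁f₂`, `f₁` squarefree, `f₂` squarefull, coprime,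
`∑_{c ≤ C squarefull} c^{1/2} gcd(c,f) ≪_ε C f₂^{1/2} f^ε`. -/
theorem squarefull_gcd_sum_bound :
    ∀ ε : ℝ, 0 < ε → ∃ A : ℝ, 0 < A ∧
      ∀ (f f₁ f₂ : ℕ) (C : ℝ),
        1 ≤ f → f = f₁ * f₂ → Squarefree f₁ → Squarefull f₂ → Nat.Coprime f₁ f₂ →
        1 ≤ C →
        (∑ c ∈ (Finset.Icc 1 ⌊C⌋₊).filter Squarefull,
            Real.sqrt c * (Nat.gcd c f : ℝ))
          ≤ A * C * Real.sqrt f₂ * (f : ℝ) ^ ε := by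
  intro ε hε
  obtain ⟨K, hK1, hKbd⟩ := divisor_bound (ε/2) (by linarith)
  refine ⟨3*K^2, by positivity, ?_⟩
  intro f f1 f2 C hf1 hff hsf1 hsf2 hco hC
  have hf0 : f ≠ 0 := by omega
  have hf20 : f2 ≠ 0 := fun h => hf0 (by simp [hff, h])
  set N := ⌊C⌋₊ with hN
  have hNC : (N:ℝ) ≤ C := Nat.floor_le (by linarith)
  set T : ℕ → ℝ :=
    fun e => ∑ c ∈ (Icc 1 N).filter (fun c => Squarefull c ∧ e ∣ c), Real.sqrt c with hT
  have hTnn : ∀ e, 0 ≤ T e := by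
    intro e
    apply Finset.sum_nonneg
    intro c _
    positivity
  have stepA : (∑ c ∈ (Icc 1 N).filter Squarefull, Real.sqrt c * (Nat.gcd c f : ℝ))
      ≤ ∑ e ∈ f.divisors, (e:ℝ) * T e := by
    calc (∑ c ∈ (Icc 1 N).filter Squarefull, Real.sqrt c * (Nat.gcd c f : ℝ))
        ≤ ∑ c ∈ (Icc 1 N).filter Squarefull, ∑ e ∈ f.divisors,
            (if e ∣ c then Real.sqrt c * e else 0) := by
          apply Finset.sum_le_sum
          intro c hc
          have hgcd : (Nat.gcd c f : ℝ) ≤ ∑ e ∈ f.divisors.filter (· ∣ c), (e:ℝ) := by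
            apply Finset.single_le_sum (f := fun e : ℕ => (e:ℝ)) (fun i _ => by positivity)
            rw [Finset.mem_filter, Nat.mem_divisors]
            exact ⟨⟨Nat.gcd_dvd_right c f, hf0⟩, Nat.gcd_dvd_left c f⟩
          calc Real.sqrt c * (Nat.gcd c f:ℝ)
              ≤ Real.sqrt c * ∑ e ∈ f.divisors.filter (· ∣ c), (e:ℝ) :=
                mul_le_mul_of_nonneg_left hgcd (Real.sqrt_nonneg _)
            _ = ∑ e ∈ f.divisors.filter (· ∣ c), Real.sqrt c * (e:ℝ) := by
                rw [Finset.mul_sum]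
            _ = ∑ e ∈ f.divisors, (if e ∣ c then Real.sqrt c * e else 0) := by
                rw [Finset.sum_filter]
      _ = ∑ e ∈ f.divisors, ∑ c ∈ (Icc 1 N).filter Squarefull,
            (if e ∣ c then Real.sqrt c * e else 0) := Finset.sum_comm
      _ = ∑ e ∈ f.divisors, (e:ℝ) * T e := by
          apply Finset.sum_congr rfl
          intro e he
          rw [← Finset.sum_filter, Finset.filter_filter, hT]
          rw [← Finset.sum_mul]
          ring
  have stepB : ∀ e ∈ f.divisors, (e:ℝ) * T e
      ≤ Real.sqrt f2 * (3 * (f.divisors.card : ℝ) * N) := by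
    intro e he
    rw [Nat.mem_divisors] at he
    have he0 : e ≠ 0 := fun h => by
      rcases he with ⟨hd, _⟩
      rw [h] at hd
      exact hf0 (Nat.eq_zero_of_zero_dvd hd)
    obtain ⟨e1, e2, hdec, h1, h2, hcoe⟩ := sf_decomp e he0
    have hTb := key_T_bound N e e1 e2 he0 hdec h1 h2 hcoe
    have he2f2 : e2 ∣ f2 := sfull_part_dvd hff hsf1 hco he.1 hdec h2 hf0
    have hτ : (e.divisors.card : ℝ) ≤ (f.divisors.card : ℝ) := by
      exact_mod_cast Finset.card_le_card (Nat.divisors_subset_of_dvd hf0 he.1)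
    have hsqrt : Real.sqrt e2 ≤ Real.sqrt f2 := by
      apply Real.sqrt_le_sqrt
      exact_mod_cast Nat.le_of_dvd (Nat.pos_of_ne_zero hf20) he2f2
    have he2R : ((e2:ℝ)) = Real.sqrt e2 * Real.sqrt e2 :=
      (Real.mul_self_sqrt (by positivity)).symm
    have heR : (e:ℝ) = (e1:ℝ) * (e2:ℝ) := by rw [hdec]; push_cast; ring
    have hsplit : (e:ℝ) * T e = Real.sqrt e2 * ((e1:ℝ) * Real.sqrt e2 * T e) := by
      rw [heR]
      conv_lhs => rw [he2R]
      ring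
    calc (e:ℝ) * T e = Real.sqrt e2 * ((e1:ℝ) * Real.sqrt e2 * T e) := hsplit
      _ ≤ Real.sqrt e2 * (3 * (e.divisors.card : ℝ) * N) :=
          mul_le_mul_of_nonneg_left hTb (Real.sqrt_nonneg _)
      _ ≤ Real.sqrt f2 * (3 * (f.divisors.card : ℝ) * N) := by
          apply mul_le_mul hsqrt _ (mul_nonneg (mul_nonneg (by norm_num) (Nat.cast_nonneg _)) (Nat.cast_nonneg _)) (Real.sqrt_nonneg _)
          apply mul_le_mul_of_nonneg_right _ (by positivity)
          linarith
  have hτf : (f.divisors.card : ℝ) ≤ K * (f:ℝ) ^ (ε/2) := hKbd f hf0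
  have hfε : ((f:ℝ) ^ (ε/2))^2 = (f:ℝ) ^ ε := by
    rw [← Real.rpow_natCast ((f:ℝ)^(ε/2)) 2, ← Real.rpow_mul (by positivity)]
    norm_num
  have hτnn : (0:ℝ) ≤ (f.divisors.card : ℝ) := by positivity
  calc (∑ c ∈ (Icc 1 N).filter Squarefull, Real.sqrt c * (Nat.gcd c f : ℝ))
      ≤ ∑ e ∈ f.divisors, (e:ℝ) * T e := stepA
    _ ≤ ∑ e ∈ f.divisors, Real.sqrt f2 * (3 * (f.divisors.card : ℝ) * N) :=
        Finset.sum_le_sum stepB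
    _ = (f.divisors.card : ℝ) * (Real.sqrt f2 * (3 * (f.divisors.card : ℝ) * N)) := by
        rw [Finset.sum_const]
        push_cast
        ring
    _ = 3 * (f.divisors.card : ℝ)^2 * (N:ℝ) * Real.sqrt f2 := by ring
    _ ≤ 3 * (K * (f:ℝ) ^ (ε/2))^2 * C * Real.sqrt f2 := by
        apply mul_le_mul _ le_rfl (Real.sqrt_nonneg _) _
        · apply mul_le_mul _ hNC (by positivity) (by positivity)
          apply mul_le_mul_of_nonneg_left _ (by norm_num)
          exact pow_le_pow_left₀ hτnn hτf 2
        · positivity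
    _ = 3*K^2 * C * Real.sqrt f2 * (f:ℝ)^ε := by
        rw [mul_pow, hfε]
        ring
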